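/- (Case κ(0) > 0 and κ'(1) < 1, exponential convergence to 1.) Let κ be a kernel map with a_0 > 0 and κ'(1) = ∑_{k=1}^∞ k a_k < 1. Then for every ρ_0 ∈ (-1,1), the kernel sequence satisfies |ρ_ℓ - 1| ≤ |ρ_0 - 1| · (κ'(1))^ℓ for all ℓ. -/

import Mathlib

/-- The kernel map associated to nonnegative coefficients `a`. -/
noncomputable def kernelMap (a : ℕ → ℝ) (ρ : ℝ) : ℝ := ∑' k, a k * ρ ^ k

lemma abs_pow_sub_one_le {ρ : ℝ} (hρ : |ρ| ≤ 1) (k : ℕ) :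
    |ρ ^ k - 1| ≤ k * |ρ - 1| := by
  have h : ρ ^ k - 1 = (∑ i ∈ Finset.range k, ρ ^ i) * (ρ - 1) := (geom_sum_mul ρ k).symm
  rw [h, abs_mul]
  gcongr
  calc |∑ i ∈ Finset.range k, ρ ^ i|
      ≤ ∑ i ∈ Finset.range k, |ρ ^ i| := Finset.abs_sum_le_sum_abs _ _
    _ ≤ ∑ _i ∈ Finset.range k, (1 : ℝ) := by
        refine Finset.sum_le_sum fun i _ => ?_
        rw [abs_pow]; exact pow_le_one₀ (abs_nonneg _) hρ
    _ = k := by simp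

/-- Case `κ(0) > 0` and `κ'(1) < 1`: exponential convergence of the kernel sequence to `1`,
where `κ'(1) = ∑ k a_k`. -/
theorem kernel_convergence_to_one_exponential
    (a : ℕ → ℝ) (ha : ∀ k, 0 ≤ a k) (hsum : HasSum a 1)
    (h0 : 0 < a 0)
    (hd : Summable fun k : ℕ => (k : ℝ) * a k)
    (hd1 : (∑' k : ℕ, (k : ℝ) * a k) < 1)
    (ρ : ℕ → ℝ) (hρ0 : ρ 0 ∈ Set.Ioo (-1 : ℝ) 1)
    (hrec : ∀ ℓ, ρ (ℓ + 1) = kernelMap a (ρ ℓ)) :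
    ∀ ℓ, |ρ ℓ - 1| ≤ |ρ 0 - 1| * (∑' k : ℕ, (k : ℝ) * a k) ^ ℓ := by
  set c := ∑' k : ℕ, (k : ℝ) * a k with hc
  have hc0 : 0 ≤ c := tsum_nonneg fun k => mul_nonneg (Nat.cast_nonneg k) (ha k)
  have habs : ∀ x : ℝ, |x| ≤ 1 → ∀ k : ℕ, |a k * x ^ k| ≤ a k := by
    intro x hx k
    rw [abs_mul, abs_pow, abs_of_nonneg (ha k)]
    exact mul_le_mul_of_nonneg_left (pow_le_one₀ (abs_nonneg _) hx) (ha k) |>.trans_eq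
      (mul_one _)
  have hsummable : ∀ x : ℝ, |x| ≤ 1 → Summable fun k => a k * x ^ k := by
    intro x hx
    refine Summable.of_norm_bounded hsum.summable fun k => ?_
    rw [Real.norm_eq_abs]; exact habs x hx k
  have hbound1 : ∀ x : ℝ, |x| ≤ 1 → |kernelMap a x| ≤ 1 := by
    intro x hx
    have hn : Summable fun k => ‖a k * x ^ k‖ := by
      simpa only [Real.norm_eq_abs] using (hsummable x hx).abs
    rw [kernelMap]
    calc |∑' k, a k * x ^ k| ≤ ∑' k, ‖a k * x ^ k‖ := by
          simpa only [Real.norm_eq_abs] using norm_tsum_le_tsum_norm hn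
      _ ≤ ∑' k, a k := Summable.tsum_le_tsum (fun k => by rw [Real.norm_eq_abs]; exact habs x hx k)
            hn hsum.summable
      _ = 1 := hsum.tsum_eq
  have hbound2 : ∀ x : ℝ, |x| ≤ 1 → |kernelMap a x - 1| ≤ c * |x - 1| := by
    intro x hx
    have hs2 : Summable fun k => a k * (x ^ k - 1) :=
      ((hsummable x hx).sub hsum.summable).congr fun k => by ring
    have hn2 : Summable fun k => ‖a k * (x ^ k - 1)‖ := by
      simpa only [Real.norm_eq_abs] using hs2.abs
    have hdiff : kernelMap a x - 1 = ∑' k, a k * (x ^ k - 1) := by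
      have h := Summable.tsum_sub (hsummable x hx) hsum.summable
      rw [hsum.tsum_eq] at h
      rw [kernelMap, ← h]
      exact (tsum_congr fun k => by ring).symm
    rw [hdiff]
    calc |∑' k, a k * (x ^ k - 1)| ≤ ∑' k, ‖a k * (x ^ k - 1)‖ := by
          simpa only [Real.norm_eq_abs] using norm_tsum_le_tsum_norm hn2
      _ ≤ ∑' k : ℕ, (k : ℝ) * a k * |x - 1| := by
          refine Summable.tsum_le_tsum (fun k => ?_) hn2 (hd.mul_right _)
          rw [Real.norm_eq_abs, abs_mul, abs_of_nonneg (ha k)]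
          calc a k * |x ^ k - 1| ≤ a k * ((k : ℝ) * |x - 1|) :=
                mul_le_mul_of_nonneg_left (abs_pow_sub_one_le hx k) (ha k)
            _ = (k : ℝ) * a k * |x - 1| := by ring
      _ = c * |x - 1| := by rw [tsum_mul_right]
  have main : ∀ ℓ, |ρ ℓ| ≤ 1 ∧ |ρ ℓ - 1| ≤ |ρ 0 - 1| * c ^ ℓ := by
    intro ℓ
    induction ℓ with
    | zero =>
      refine ⟨le_of_lt (abs_lt.mpr ⟨hρ0.1, hρ0.2⟩), ?_⟩
      simp
    | succ n ih =>
      rw [hrec n]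
      refine ⟨hbound1 _ ih.1, ?_⟩
      calc |kernelMap a (ρ n) - 1| ≤ c * |ρ n - 1| := hbound2 _ ih.1
        _ ≤ c * (|ρ 0 - 1| * c ^ n) := mul_le_mul_of_nonneg_left ih.2 hc0
        _ = |ρ 0 - 1| * c ^ (n + 1) := by ring
  exact fun ℓ => (main ℓ).2
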